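/- Let μ ∈ P(Ω) and suppose (μ_n) is a sequence in P(Ω) with μ_n ⇀ μ narrowly, each μ_n of the form (1/n)Σδ_{z_i^n} such that the vertical marginal (π₂)#μ_n is supported on points with pairwise distance ≥ c n^{−1/2+γ} and each horizontal slip plane carries at most (1/c) n^{1/2+γ} atoms, for fixed −1/2 < γ < 1/2 and c > 0. Then the vertical marginal of the limit satisfies (π₂)#μ ≤ (1/c²) 𝓛¹ (absolutely continuous with density at most 1/c²). -/

import Mathlib

open MeasureTheory Filter Metric Set ENNReal
noncomputable section
open scoped Classical

abbrev Pt := EuclideanSpace ℝ (Fin 2)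

lemma sep_card_aux (δ : ℝ) (hδ : 0 < δ) : ∀ (k : ℕ) (V : Finset ℝ) (a b : ℝ), a < b →
    V.card ≤ k → (∀ x ∈ V, x ∈ Set.Ioo a b) →
    (∀ x ∈ V, ∀ y ∈ V, x ≠ y → δ ≤ |x - y|) →
    (V.card : ℝ) ≤ (b - a) / δ + 1 := by
  intro k
  induction k with
  | zero =>
    intro V a b hab hk _ _
    have : V.card = 0 := Nat.le_zero.mp hk
    rw [this]
    have h1 : 0 < (b - a) / δ := div_pos (by linarith) hδ
    push_cast; linarith
  | succ k ih =>
    intro V a b hab hk hsub hsep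
    rcases V.eq_empty_or_nonempty with rfl | hne
    · have h1 : 0 < (b - a) / δ := div_pos (by linarith) hδ
      simp; linarith
    · set m := V.min' hne with hm
      have hmV : m ∈ V := V.min'_mem hne
      set V' := V.erase m with hV'
      have hcard : V.card = V'.card + 1 := (Finset.card_erase_add_one hmV).symm
      have hsub' : ∀ x ∈ V', x ∈ Set.Ioo (a + δ) b := by
        intro x hx
        have hxV := Finset.mem_of_mem_erase hx
        have hxm : x ≠ m := Finset.ne_of_mem_erase hx
        have h1 : m ≤ x := V.min'_le x hxV
        have h2 : δ ≤ |x - m| := hsep x hxV m hmV hxm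
        rw [abs_of_nonneg (by linarith)] at h2
        have h3 := (hsub m hmV).1
        exact ⟨by linarith, (hsub x hxV).2⟩
      rcases V'.eq_empty_or_nonempty with h0 | hne'
      · have h1 : V.card = 1 := by rw [hcard, h0]; simp
        rw [h1]
        have h2 : 0 < (b - a) / δ := div_pos (by linarith) hδ
        push_cast; linarith
      · have hab' : a + δ < b := by
          obtain ⟨x, hx⟩ := hne'
          have := hsub' x hx
          linarith [this.1, this.2]
        have hk' : V'.card ≤ k := by omega
        have hsep' : ∀ x ∈ V', ∀ y ∈ V', x ≠ y → δ ≤ |x - y| := fun x hx y hy =>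
          hsep x (Finset.mem_of_mem_erase hx) y (Finset.mem_of_mem_erase hy)
        have hIH := ih V' (a + δ) b hab' hk' hsub' hsep'
        have hdiv : (b - (a + δ)) / δ = (b - a) / δ - 1 := by field_simp; ring
        rw [hdiv] at hIH
        rw [hcard]; push_cast; linarith


lemma count_bound (n : ℕ) (hn : 1 ≤ n) (γ c : ℝ) (hc : 0 < c) (w : Fin n → ℝ)
    (hsep : ∀ i j, w i ≠ w j → c * (n : ℝ) ^ (-(1/2 : ℝ) + γ) ≤ |w i - w j|)
    (hcount : ∀ s : ℝ, ((Finset.univ.filter (fun i => w i = s)).card : ℝ) ≤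
      (1 / c) * (n : ℝ) ^ ((1/2 : ℝ) + γ))
    (a b : ℝ) (hab : a < b) :
    (((Finset.univ.filter (fun i => w i ∈ Set.Ioo a b)).card : ℝ)) ≤
      (b - a) * n / c ^ 2 + (1 / c) * (n : ℝ) ^ ((1/2 : ℝ) + γ) := by
  have hnpos : (0 : ℝ) < n := by exact_mod_cast hn
  set A : ℝ := (n : ℝ) ^ (-(1/2 : ℝ) + γ) with hA
  have hApos : 0 < A := Real.rpow_pos_of_pos hnpos _
  have hδ : 0 < c * A := mul_pos hc hApos
  set T := Finset.univ.filter (fun i => w i ∈ Set.Ioo a b) with hT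
  set V := T.image w with hV
  -- separation properties of V
  have hVsub : ∀ x ∈ V, x ∈ Set.Ioo a b := by
    intro x hx
    obtain ⟨i, hi, rfl⟩ := Finset.mem_image.mp hx
    exact (Finset.mem_filter.mp hi).2
  have hVsep : ∀ x ∈ V, ∀ y ∈ V, x ≠ y → c * A ≤ |x - y| := by
    intro x hx y hy hxy
    obtain ⟨i, _, rfl⟩ := Finset.mem_image.mp hx
    obtain ⟨j, _, rfl⟩ := Finset.mem_image.mp hy
    exact hsep i j hxy
  have hVcard : (V.card : ℝ) ≤ (b - a) / (c * A) + 1 :=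
    sep_card_aux (c * A) hδ V.card V a b hab le_rfl hVsub hVsep
  -- fiberwise count
  have hfib : T.card = ∑ v ∈ V, (T.filter (fun i => w i = v)).card :=
    Finset.card_eq_sum_card_fiberwise (fun i hi => Finset.mem_image_of_mem w hi)
  have hTcard : (T.card : ℝ) ≤ (V.card : ℝ) * ((1 / c) * (n : ℝ) ^ ((1/2 : ℝ) + γ)) := by
    rw [hfib]
    push_cast
    calc (∑ v ∈ V, ((T.filter (fun i => w i = v)).card : ℝ))
        ≤ ∑ v ∈ V, (1 / c) * (n : ℝ) ^ ((1/2 : ℝ) + γ) := by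
          refine Finset.sum_le_sum fun v _ => ?_
          refine le_trans ?_ (hcount v)
          have hsubss : T.filter (fun i => w i = v) ⊆
              Finset.univ.filter (fun i => w i = v) := by
            intro i hi
            simp only [Finset.mem_filter] at hi ⊢
            exact ⟨Finset.mem_univ i, hi.2⟩
          exact_mod_cast Finset.card_le_card hsubss
      _ = (V.card : ℝ) * ((1 / c) * (n : ℝ) ^ ((1/2 : ℝ) + γ)) := by
          rw [Finset.sum_const, nsmul_eq_mul]
  -- algebra
  have hkey : (n : ℝ) ^ ((1/2 : ℝ) + γ) = (n : ℝ) * A := by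
    have h12 : (1/2 : ℝ) + γ = 1 + (-(1/2) + γ) := by ring
    rw [hA, h12, Real.rpow_add hnpos, Real.rpow_one]
  calc (T.card : ℝ) ≤ ((b - a) / (c * A) + 1) * ((1 / c) * (n : ℝ) ^ ((1/2 : ℝ) + γ)) := by
        refine hTcard.trans (mul_le_mul_of_nonneg_right hVcard ?_)
        positivity
    _ = (b - a) * n / c ^ 2 + (1 / c) * (n : ℝ) ^ ((1/2 : ℝ) + γ) := by
        rw [hkey]
        field_simp


lemma stieltjes_measure_le_smul_volume (F : StieltjesFunction ℝ) (K : ℝ) (hK : 0 < K)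
    (hF : ∀ a b : ℝ, a ≤ b → F b - F a ≤ K * (b - a)) :
    F.measure ≤ ENNReal.ofReal K • (volume : Measure ℝ) := by
  have hK0 : ENNReal.ofReal K ≠ 0 := (ENNReal.ofReal_pos.mpr hK).ne'
  have hKt : ENNReal.ofReal K ≠ ∞ := ENNReal.ofReal_ne_top
  -- length comparison
  have hlen : ∀ s : Set ℝ, F.length s ≤ ENNReal.ofReal K * StieltjesFunction.id.length s := by
    intro s
    rw [mul_comm, ← ENNReal.div_le_iff_le_mul (Or.inl hK0) (Or.inl hKt),
      StieltjesFunction.length_eq StieltjesFunction.id]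
    refine le_iInf fun a => le_iInf fun b => le_iInf fun hsub => ?_
    rw [ENNReal.div_le_iff_le_mul (Or.inl hK0) (Or.inl hKt)]
    have h1 : F.length s ≤ ENNReal.ofReal (F b - F a) := by
      rw [StieltjesFunction.length_eq]
      exact iInf_le_of_le a (iInf_le_of_le b (iInf_le _ hsub))
    refine h1.trans ?_
    have h2 : ENNReal.ofReal (F b - F a) ≤ ENNReal.ofReal (K * (b - a)) := by
      rcases le_total a b with hab | hab
      · exact ENNReal.ofReal_le_ofReal (hF a b hab)
      · have : F b - F a ≤ 0 := sub_nonpos.mpr (F.mono hab)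
        rw [ENNReal.ofReal_eq_zero.mpr this]
        exact zero_le'
    refine h2.trans ?_
    rw [ENNReal.ofReal_mul hK.le]
    simp [StieltjesFunction.id, mul_comm]
  -- outer measure comparison
  intro s
  have h1 : F.measure s = F.outer s := by rw [StieltjesFunction.measure]; rfl
  have h2 : (ENNReal.ofReal K • (volume : Measure ℝ)) s
      = ENNReal.ofReal K * StieltjesFunction.id.outer s := by
    rw [Measure.smul_apply, smul_eq_mul, Real.volume_val, StieltjesFunction.measure]; rfl
  rw [h1, h2, mul_comm, ← ENNReal.div_le_iff_le_mul (Or.inl hK0) (Or.inl hKt)]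
  show F.outer s / ENNReal.ofReal K ≤ OuterMeasure.ofFunction StieltjesFunction.id.length
    StieltjesFunction.id.length_empty s
  rw [OuterMeasure.ofFunction_apply]
  refine le_iInf fun t => le_iInf fun ht => ?_
  rw [ENNReal.div_le_iff_le_mul (Or.inl hK0) (Or.inl hKt)]
  have h3 : F.outer s ≤ ∑' n, F.length (t n) := by
    rw [show F.outer = OuterMeasure.ofFunction F.length F.length_empty from rfl,
      OuterMeasure.ofFunction_apply]
    exact iInf_le_of_le t (iInf_le _ ht)
  refine h3.trans ?_
  calc ∑' n, F.length (t n) ≤ ∑' n, ENNReal.ofReal K * StieltjesFunction.id.length (t n) :=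
        ENNReal.tsum_le_tsum fun n => hlen _
    _ = ENNReal.ofReal K * ∑' n, StieltjesFunction.id.length (t n) := ENNReal.tsum_mul_left
    _ = (∑' n, StieltjesFunction.id.length (t n)) * ENNReal.ofReal K := mul_comm _ _


/-- if empirical measures `μ_n = (1/n) Σ δ_{z_i^n}` converge narrowly to `μ`,
their slip planes (distinct vertical coordinates) are separated by at least `c n^{-1/2+γ}`
and each slip plane carries at most `(1/c) n^{1/2+γ}` dislocations, then the vertical
marginal of `μ` is absolutely continuous with density at most `1/c²`:
`(π₂)#μ ≤ (1/c²) 𝓛¹`. -/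
theorem stmt14 (Ω : Set Pt) (hΩo : IsOpen Ω) (hΩb : Bornology.IsBounded Ω)
    (γ c : ℝ) (hγ1 : -(1/2 : ℝ) < γ) (hγ2 : γ < 1/2) (hc : 0 < c)
    (z : (n : ℕ) → Fin n → Pt) (μs : ℕ → Measure Pt) (μ : Measure Pt)
    [IsProbabilityMeasure μ]
    (hμs : ∀ n, 1 ≤ n → μs n = (n : ℝ≥0∞)⁻¹ • ∑ i : Fin n, Measure.dirac (z n i))
    (hsep : ∀ n, 1 ≤ n → ∀ i j : Fin n, (z n i) 1 ≠ (z n j) 1 →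
      c * (n : ℝ) ^ (-(1/2 : ℝ) + γ) ≤ |(z n i) 1 - (z n j) 1|)
    (hcount : ∀ n, 1 ≤ n → ∀ s : ℝ,
      ((Finset.univ.filter (fun i : Fin n => (z n i) 1 = s)).card : ℝ) ≤
        (1 / c) * (n : ℝ) ^ ((1/2 : ℝ) + γ))
    (hconv : ∀ f : BoundedContinuousFunction Pt ℝ,
      Tendsto (fun n => ∫ x, f x ∂(μs n)) atTop (nhds (∫ x, f x ∂μ))) :
    μ.map (fun x : Pt => x 1) ≤ ENNReal.ofReal (1 / c ^ 2) • (volume : Measure ℝ) := by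
  have hmeas : Measurable (fun x : Pt => x 1) := (PiLp.continuous_apply (p := 2) (β := fun _ : Fin 2 => ℝ) (1 : Fin 2)).measurable
  set ν : Measure ℝ := μ.map (fun x : Pt => x 1) with hν
  haveI : IsProbabilityMeasure ν := Measure.isProbabilityMeasure_map hmeas.aemeasurable
  -- probability measures μs (n+1)
  have hP : ∀ n : ℕ, IsProbabilityMeasure (μs (n + 1)) := by
    intro n
    constructor
    rw [hμs (n + 1) le_add_self]
    simp only [Measure.smul_apply, Measure.coe_finset_sum, Finset.sum_apply, measure_univ,
      Finset.sum_const, Finset.card_univ, Fintype.card_fin, nsmul_eq_mul, mul_one, smul_eq_mul]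
    exact ENNReal.inv_mul_cancel (by exact_mod_cast (Nat.succ_ne_zero n)) (by simp)
  let P : ℕ → ProbabilityMeasure Pt := fun n => ⟨μs (n + 1), hP n⟩
  let Pμ : ProbabilityMeasure Pt := ⟨μ, inferInstance⟩
  have hPconv : Tendsto P atTop (nhds Pμ) := by
    rw [ProbabilityMeasure.tendsto_iff_forall_integral_tendsto]
    intro f
    exact (hconv f).comp (tendsto_add_atTop_nat 1)
  -- open interval bound
  have hIoo : ∀ a b : ℝ, a < b → ν (Set.Ioo a b) ≤ ENNReal.ofReal (1 / c ^ 2 * (b - a)) := by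
    intro a b hab
    set G : Set Pt := (fun x : Pt => x 1) ⁻¹' Set.Ioo a b with hG
    have hGm : MeasurableSet G := hmeas measurableSet_Ioo
    have hGo : IsOpen G := isOpen_Ioo.preimage (PiLp.continuous_apply (p := 2) (β := fun _ : Fin 2 => ℝ) (1 : Fin 2))
    have hν1 : ν (Set.Ioo a b) = μ G := Measure.map_apply hmeas measurableSet_Ioo
    -- per-n bound
    have hbound : ∀ n : ℕ, (μs (n + 1)) G ≤
        ENNReal.ofReal ((b - a) / c ^ 2 + (1 / c) * ((n + 1 : ℕ) : ℝ) ^ (γ - (1/2 : ℝ))) := by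
      intro n
      set m : ℕ := n + 1 with hmdef
      have hm1 : 1 ≤ m := le_add_self
      have hmR : (0 : ℝ) < m := by exact_mod_cast Nat.succ_pos n
      have hsum : (μs m) G =
          (m : ℝ≥0∞)⁻¹ *
            ((Finset.univ.filter (fun i : Fin m => (z m i) 1 ∈ Set.Ioo a b)).card : ℝ≥0∞) := by
        rw [hμs m hm1, Measure.smul_apply, smul_eq_mul]
        congr 1
        rw [Measure.coe_finset_sum, Finset.sum_apply,
          Finset.sum_congr rfl (fun i _ => Measure.dirac_apply' (z m i) hGm)]
        simp only [Set.indicator_apply, Set.mem_preimage, Pi.one_apply, hG]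
        rw [Finset.sum_boole]
      have hcard : ((Finset.univ.filter (fun i : Fin m => (z m i) 1 ∈ Set.Ioo a b)).card : ℝ) ≤
          (b - a) * m / c ^ 2 + (1 / c) * (m : ℝ) ^ ((1/2 : ℝ) + γ) :=
        count_bound m hm1 γ c hc (fun i => (z m i) 1) (hsep m hm1) (hcount m hm1) a b hab
      rw [hsum]
      have h1 : (m : ℝ≥0∞)⁻¹ *
            ((Finset.univ.filter (fun i : Fin m => (z m i) 1 ∈ Set.Ioo a b)).card : ℝ≥0∞)
          = ENNReal.ofReal ((m : ℝ)⁻¹ *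
            ((Finset.univ.filter (fun i : Fin m => (z m i) 1 ∈ Set.Ioo a b)).card : ℝ)) := by
        rw [ENNReal.ofReal_mul (by positivity), ENNReal.ofReal_inv_of_pos hmR,
          ENNReal.ofReal_natCast, ENNReal.ofReal_natCast]
      rw [h1]
      apply ENNReal.ofReal_le_ofReal
      have hr : (m : ℝ) ^ ((1/2 : ℝ) + γ) = (m : ℝ) * (m : ℝ) ^ (γ - (1/2 : ℝ)) := by
        rw [show (1/2 : ℝ) + γ = 1 + (γ - 1/2) by ring, Real.rpow_add hmR, Real.rpow_one]
      calc (m : ℝ)⁻¹ * ((Finset.univ.filter (fun i : Fin m => (z m i) 1 ∈ Set.Ioo a b)).card : ℝ)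
          ≤ (m : ℝ)⁻¹ * ((b - a) * m / c ^ 2 + (1 / c) * (m : ℝ) ^ ((1/2 : ℝ) + γ)) :=
            mul_le_mul_of_nonneg_left hcard (by positivity)
        _ = (b - a) / c ^ 2 + (1 / c) * (m : ℝ) ^ (γ - (1/2 : ℝ)) := by
            rw [hr]; field_simp
    -- portmanteau
    have hport : μ G ≤ atTop.liminf fun n => (μs (n + 1)) G := by
      have := ProbabilityMeasure.le_liminf_measure_open_of_tendsto hPconv hGo
      exact this
    have hlim : Tendsto (fun n : ℕ =>
        ENNReal.ofReal ((b - a) / c ^ 2 + (1 / c) * ((n + 1 : ℕ) : ℝ) ^ (γ - (1/2 : ℝ))))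
        atTop (nhds (ENNReal.ofReal ((b - a) / c ^ 2))) := by
      have h0 : Tendsto (fun n : ℕ => (1 / c) * ((n + 1 : ℕ) : ℝ) ^ (γ - (1/2 : ℝ)))
          atTop (nhds 0) := by
        have hnat : Tendsto (fun n : ℕ => ((n + 1 : ℕ) : ℝ)) atTop atTop :=
          tendsto_natCast_atTop_atTop.comp (tendsto_add_atTop_nat 1)
        have hpow : Tendsto (fun n : ℕ => ((n + 1 : ℕ) : ℝ) ^ (γ - (1/2 : ℝ)))
            atTop (nhds 0) := by
          have hexp : γ - (1/2 : ℝ) = -((1/2 : ℝ) - γ) := by ring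
          rw [hexp]
          exact (tendsto_rpow_neg_atTop (by linarith)).comp hnat
        simpa using hpow.const_mul (1 / c)
      have := (tendsto_const_nhds (x := (b - a) / c ^ 2) (f := atTop (α := ℕ))).add h0
      rw [add_zero] at this
      exact ENNReal.tendsto_ofReal this
    have hliminf : (atTop.liminf fun n => (μs (n + 1)) G) ≤
        ENNReal.ofReal ((b - a) / c ^ 2) := by
      calc (atTop.liminf fun n => (μs (n + 1)) G)
          ≤ atTop.liminf (fun n : ℕ =>
            ENNReal.ofReal ((b - a) / c ^ 2 + (1 / c) * ((n + 1 : ℕ) : ℝ) ^ (γ - (1/2 : ℝ)))) :=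
            liminf_le_liminf (Eventually.of_forall hbound)
        _ = ENNReal.ofReal ((b - a) / c ^ 2) := hlim.liminf_eq
    rw [hν1, show (1 / c ^ 2) * (b - a) = (b - a) / c ^ 2 by ring]
    exact hport.trans hliminf
  -- Ioc bound
  have hIoc : ∀ a b : ℝ, a ≤ b → ν (Set.Ioc a b) ≤ ENNReal.ofReal (1 / c ^ 2 * (b - a)) := by
    intro a b hab
    refine ENNReal.le_of_forall_pos_le_add fun ε hε _ => ?_
    set δ : ℝ := (ε : ℝ) * c ^ 2 with hδdef
    have hδ : 0 < δ := by positivity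
    have h1 : ν (Set.Ioc a b) ≤ ν (Set.Ioo a (b + δ)) :=
      measure_mono (Set.Ioc_subset_Ioo_right (by linarith))
    have h2 := hIoo a (b + δ) (by linarith)
    have h3 : ENNReal.ofReal (1 / c ^ 2 * (b + δ - a)) ≤
        ENNReal.ofReal (1 / c ^ 2 * (b - a)) + (ε : ℝ≥0∞) := by
      have heq : 1 / c ^ 2 * (b + δ - a) = 1 / c ^ 2 * (b - a) + (ε : ℝ) := by
        field_simp
        ring
      rw [heq, ← ENNReal.ofReal_coe_nnreal]
      exact ENNReal.ofReal_add_le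
    exact (h1.trans h2).trans h3
  -- cdf is Lipschitz
  set F : StieltjesFunction ℝ := ProbabilityTheory.cdf ν with hF
  have hFL : ∀ a b : ℝ, a ≤ b → F b - F a ≤ (1 / c ^ 2) * (b - a) := by
    intro a b hab
    have hIic : ν (Set.Iic b) = ν (Set.Iic a) + ν (Set.Ioc a b) := by
      rw [← measure_union (Set.Iic_disjoint_Ioc le_rfl) measurableSet_Ioc,
        Set.Iic_union_Ioc_eq_Iic hab]
    rw [hF, ProbabilityTheory.cdf_eq_real, ProbabilityTheory.cdf_eq_real, measureReal_def,
      measureReal_def, hIic,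
      ENNReal.toReal_add (measure_ne_top ν _) (measure_ne_top ν _), add_sub_cancel_left]
    exact ENNReal.toReal_le_of_le_ofReal (mul_nonneg (by positivity) (by linarith)) (hIoc a b hab)
  have hmain : F.measure ≤ ENNReal.ofReal (1 / c ^ 2) • (volume : Measure ℝ) :=
    stieltjes_measure_le_smul_volume F (1 / c ^ 2) (by positivity) hFL
  have hcdf : F.measure = ν := ProbabilityTheory.measure_cdf ν
  exact hcdf ▸ hmain
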